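/- Let L be a finite-dimensional Lie algebra over a field F with dim L ≥ 3, whose derived subalgebra L¹ = ⁅L, L⁆ has dimension 2 and whose center satisfies dim Z(L) = dim L − 3. Then the commuting graph Γ(L) is disconnected. -/

import Mathlib

/-- The commuting graph of a Lie algebra `L` over `F`: vertices are the elements of
`L` outside the center, and two distinct vertices are adjacent iff they commute. -/
def commutingGraph (F : Type*) [CommRing F] (L : Type*) [LieRing L] [LieAlgebra F L] :
    SimpleGraph {x : L // x ∉ LieAlgebra.center F L} where
  Adj x y := x ≠ y ∧ ⁅(x : L), (y : L)⁆ = 0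
  symm := ⟨fun x y h => ⟨h.1.symm, by rw [← lie_skew, h.2, neg_zero]⟩⟩
  loopless := ⟨fun x h => h.1 rfl⟩

open Module Submodule

section Abstract

variable {F V W : Type*} [Field F] [AddCommGroup V] [Module F V]
  [AddCommGroup W] [Module F W]

lemma skew_of_alt (B : V →ₗ[F] V →ₗ[F] W) (halt : ∀ x, B x x = 0) (x y : V) :
    B x y = - B y x := by
  have h := halt (x + y)
  simp only [map_add, LinearMap.add_apply, halt, zero_add, add_zero] at h
  exact eq_neg_of_add_eq_zero_right h

lemma cyc_exists (B : V →ₗ[F] V →ₗ[F] W) (halt : ∀ x, B x x = 0)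
    (u : Fin 3 → V) (hu : LinearIndependent F u) (c : Fin 3 → F) (hc2 : c 2 ≠ 0)
    (hrel : c 0 • B (u 1) (u 2) + c 1 • B (u 2) (u 0) + c 2 • B (u 0) (u 1) = 0) :
    ∃ a b : V, LinearIndependent F ![a, b] ∧ B a b = 0 := by
  have key : ∀ g : Fin 3 → F, (g 0 • u 0 + g 1 • u 1 + g 2 • u 2 = 0) → ∀ i, g i = 0 := by
    intro g hg i
    refine Fintype.linearIndependent_iff.mp hu g ?_ i
    rw [Fin.sum_univ_three]; exact hg
  refine ⟨u 0 - (c 0 / c 2) • u 2, u 1 - (c 1 / c 2) • u 2, ?_, ?_⟩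
  · rw [linearIndependent_fin2]
    constructor
    · show u 1 - (c 1 / c 2) • u 2 ≠ 0
      intro h
      have h0 := key ![0, 1, -(c 1 / c 2)] (by
        simp only [Matrix.cons_val_zero, Matrix.cons_val_one, Matrix.head_cons,
          Matrix.cons_val_two, Matrix.tail_cons]
        linear_combination (norm := module) h) 1
      simp at h0
    · intro s h
      simp only [Matrix.cons_val_one, Matrix.head_cons, Matrix.cons_val_zero] at h
      have h0 := key ![1, -s, s * (c 1 / c 2) - c 0 / c 2] (by
        simp only [Matrix.cons_val_zero, Matrix.cons_val_one, Matrix.head_cons,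
          Matrix.cons_val_two, Matrix.tail_cons]
        linear_combination (norm := module) - h) 0
      simp at h0
  · have h02 : B (u 0) (u 2) = - B (u 2) (u 0) := skew_of_alt B halt _ _
    have h21 : B (u 2) (u 1) = - B (u 1) (u 2) := skew_of_alt B halt _ _
    have h22 : B (u 2) (u 2) = 0 := halt _
    simp only [map_sub, map_smul, LinearMap.sub_apply, LinearMap.smul_apply, h02, h21, h22,
      smul_neg, smul_zero, sub_zero, sub_neg_eq_add]
    linear_combination (norm := (match_scalars <;> field_simp <;> ring)) ((c 2)⁻¹ : F) • hrel

lemma exists_isotropic_pair [FiniteDimensional F V] [FiniteDimensional F W]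
    (B : V →ₗ[F] V →ₗ[F] W) (halt : ∀ x, B x x = 0) (hV : finrank F V = 3)
    (D : Submodule F W) (hBD : ∀ x y, B x y ∈ D) (hD : finrank F D ≤ 2) :
    ∃ a b : V, LinearIndependent F ![a, b] ∧ B a b = 0 := by
  let e := Module.finBasisOfFinrankEq F V hV
  let u : Fin 3 → V := e
  have hu : LinearIndependent F u := e.linearIndependent
  let w : Fin 3 → D := ![⟨B (u 1) (u 2), hBD _ _⟩, ⟨B (u 2) (u 0), hBD _ _⟩,
    ⟨B (u 0) (u 1), hBD _ _⟩]
  have hnli : ¬ LinearIndependent F w := by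
    intro h
    have hcard := h.fintype_card_le_finrank
    rw [Fintype.card_fin] at hcard
    omega
  obtain ⟨g, hg, k, hk⟩ := Fintype.not_linearIndependent_iff.mp hnli
  have hgW : g 0 • B (u 1) (u 2) + g 1 • B (u 2) (u 0) + g 2 • B (u 0) (u 1) = 0 := by
    have h2 := congrArg (Subtype.val) hg
    rw [Fin.sum_univ_three] at h2
    simpa [w] using h2
  have comp_ind : ∀ f : Fin 3 → Fin 3, Function.Injective f →
      LinearIndependent F (u ∘ f) := fun f hf => hu.comp f hf
  fin_cases k
  · refine cyc_exists B halt ![u 1, u 2, u 0] ?_ ![g 1, g 2, g 0] (by simpa using hk) ?_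
    · have := comp_ind ![1, 2, 0] (by decide)
      convert this using 1
      funext i; fin_cases i <;> rfl
    · simp only [Matrix.cons_val_zero, Matrix.cons_val_one, Matrix.head_cons,
        Matrix.cons_val_two, Matrix.tail_cons]
      linear_combination (norm := module) hgW
  · refine cyc_exists B halt ![u 2, u 0, u 1] ?_ ![g 2, g 0, g 1] (by simpa using hk) ?_
    · have := comp_ind ![2, 0, 1] (by decide)
      convert this using 1
      funext i; fin_cases i <;> rfl
    · simp only [Matrix.cons_val_zero, Matrix.cons_val_one, Matrix.head_cons,
        Matrix.cons_val_two, Matrix.tail_cons]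
      linear_combination (norm := module) hgW
  · refine cyc_exists B halt u hu g (by simpa using hk) hgW

lemma sep_lemma [FiniteDimensional F V]
    (B : V →ₗ[F] V →ₗ[F] W) (halt : ∀ x, B x x = 0)
    (hnd : ∀ x, B x = 0 → x = 0) (hV : finrank F V = 3)
    (a b : V) (hind : LinearIndependent F ![a, b]) (hab : B a b = 0)
    (v : V) (hv : v ∉ span F ({a, b} : Set V)) (w : V) (hbvw : B v w = 0)
    (hw : w ∉ span F ({v} : Set V)) : False := by
  have hsk := skew_of_alt B halt
  have hrangeab : Set.range ![a, b] = {a, b} := by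
    ext x; simp [Fin.exists_fin_two, eq_comm, or_comm]
  have hrange : Set.range ![a, b, v] = {a, b, v} := by
    simp only [Matrix.range_cons, Matrix.range_empty, Set.union_empty, Set.singleton_union]
  have hind3 : LinearIndependent F ![a, b, v] := by
    have h1 : (Fin.snoc ![a, b] v : Fin 3 → V) = ![a, b, v] := by
      funext i
      fin_cases i <;> simp [Fin.snoc] <;> rfl
    rw [← h1, linearIndependent_fin_snoc]
    exact ⟨hind, by rwa [hrangeab]⟩
  have hsp : span F ({a, b, v} : Set V) = ⊤ := by
    rw [← hrange]
    apply Submodule.eq_top_of_finrank_eq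
    rw [finrank_span_eq_card hind3, Fintype.card_fin, hV]
  -- coordinates of w
  have hwmem : w ∈ span F ({a, b, v} : Set V) := by rw [hsp]; exact mem_top
  rw [mem_span_insert] at hwmem
  obtain ⟨α, z, hz, hwz⟩ := hwmem
  rw [mem_span_insert] at hz
  obtain ⟨β, z', hz', hzz⟩ := hz
  rw [mem_span_singleton] at hz'
  obtain ⟨γ, rfl⟩ := hz'
  have hwexp : w = α • a + β • b + γ • v := by rw [hwz, hzz]; abel
  set u : V := α • a + β • b with hu
  have huw : u = w - γ • v := by rw [hwexp]; abel
  have hune : u ≠ 0 := by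
    intro h0
    apply hw
    rw [mem_span_singleton]
    refine ⟨γ, ?_⟩
    have := huw.symm.trans h0
    rw [sub_eq_zero] at this
    exact this.symm
  apply hune
  apply hnd
  -- show B u x = 0 for all x
  have hBua : B u a = 0 := by
    rw [hu]
    simp only [map_add, map_smul, LinearMap.add_apply, LinearMap.smul_apply]
    rw [halt, hsk b a, hab]
    simp
  have hBub : B u b = 0 := by
    rw [hu]
    simp only [map_add, map_smul, LinearMap.add_apply, LinearMap.smul_apply]
    rw [halt, hab]
    simp
  have hBuv : B u v = 0 := by
    rw [huw]
    simp only [map_sub, map_smul, LinearMap.sub_apply, LinearMap.smul_apply]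
    rw [halt, hsk w v, hbvw]
    simp
  have htot : ∀ x, B u x = 0 := by
    intro x
    have hx : x ∈ span F ({a, b, v} : Set V) := by rw [hsp]; exact mem_top
    induction hx using Submodule.span_induction with
    | mem y hy =>
      rcases hy with rfl | rfl | rfl
      · exact hBua
      · exact hBub
      · exact hBuv
    | zero => simp
    | add y z _ _ hy hz => rw [map_add, hy, hz, add_zero]
    | smul c y _ hy => rw [map_smul, hy, smul_zero]
  ext x
  rw [htot x]
  simp

end Abstract

/-- a finite-dimensional Lie algebra of dimension at least 3 with
two-dimensional derived subalgebra and center of codimension exactly 3 has a disconnected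
commuting graph. -/
theorem stmt13 (F : Type*) [Field F] (L : Type*) [LieRing L] [LieAlgebra F L]
    [Module.Finite F L]
    (hdimL : 3 ≤ Module.finrank F L)
    (hder : Module.finrank F (LieAlgebra.derivedSeries F L 1).toSubmodule = 2)
    (hcen : Module.finrank F (LieAlgebra.center F L).toSubmodule = Module.finrank F L - 3) :
    ¬ (commutingGraph F L).Connected := by
  classical
  set Z : Submodule F L := (LieAlgebra.center F L).toSubmodule with hZdef
  have hmemZ : ∀ z : L, z ∈ Z ↔ ∀ y : L, ⁅y, z⁆ = 0 := by
    intro z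
    rw [hZdef, LieSubmodule.mem_toSubmodule]
    exact LieModule.mem_maxTrivSubmodule F L L z
  -- the bilinear form on the quotient
  have hker1 : ∀ x : L, Z ≤ LinearMap.ker ((LieModule.toEnd F L L) x) := by
    intro x z hz
    rw [LinearMap.mem_ker, LieModule.toEnd_apply_apply]
    rw [(hmemZ z).mp hz x]
  let A : L →ₗ[F] (L ⧸ Z) →ₗ[F] L :=
    { toFun := fun x => Z.liftQ ((LieModule.toEnd F L L) x) (hker1 x)
      map_add' := fun x y => by
        apply Submodule.linearMap_qext
        ext m
        simp [add_lie]
      map_smul' := fun c x => by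
        apply Submodule.linearMap_qext
        ext m
        simp [smul_lie] }
  have hkerA : Z ≤ LinearMap.ker A := by
    intro z hz
    rw [LinearMap.mem_ker]
    apply Submodule.linearMap_qext
    ext m
    have : ⁅z, m⁆ = 0 := by
      rw [← lie_skew, (hmemZ z).mp hz m, neg_zero]
    simp [A, this]
  let B : (L ⧸ Z) →ₗ[F] (L ⧸ Z) →ₗ[F] L := Z.liftQ A hkerA
  have hBmk : ∀ x y : L, B (Submodule.Quotient.mk x) (Submodule.Quotient.mk y) = ⁅x, y⁆ := by
    intro x y
    simp [B, A]
  have halt : ∀ ξ : L ⧸ Z, B ξ ξ = 0 := by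
    intro ξ
    obtain ⟨x, rfl⟩ := Submodule.Quotient.mk_surjective Z ξ
    rw [hBmk, lie_self]
  have hnd : ∀ ξ : L ⧸ Z, B ξ = 0 → ξ = 0 := by
    intro ξ hξ
    obtain ⟨x, rfl⟩ := Submodule.Quotient.mk_surjective Z ξ
    rw [Submodule.Quotient.mk_eq_zero, hmemZ]
    intro y
    rw [← neg_eq_zero, lie_skew]
    have : B (Submodule.Quotient.mk x) (Submodule.Quotient.mk y) = 0 := by rw [hξ]; simp
    rwa [hBmk] at this
  have hV3 : Module.finrank F (L ⧸ Z) = 3 := by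
    have h := Z.finrank_quotient_add_finrank
    omega
  set D : Submodule F L := (LieAlgebra.derivedSeries F L 1).toSubmodule with hDdef
  have hBD : ∀ ξ η : L ⧸ Z, B ξ η ∈ D := by
    intro ξ η
    obtain ⟨x, rfl⟩ := Submodule.Quotient.mk_surjective Z ξ
    obtain ⟨y, rfl⟩ := Submodule.Quotient.mk_surjective Z η
    rw [hBmk, hDdef, LieSubmodule.mem_toSubmodule]
    have : LieAlgebra.derivedSeries F L 1 = ⁅(⊤ : LieIdeal F L), (⊤ : LieIdeal F L)⁆ := by
      rw [LieAlgebra.derivedSeries_def, LieAlgebra.derivedSeriesOfIdeal_succ,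
        LieAlgebra.derivedSeriesOfIdeal_zero]
    rw [this]
    exact LieSubmodule.lie_mem_lie (LieSubmodule.mem_top x) (LieSubmodule.mem_top y)
  obtain ⟨a, b, hind, hab⟩ := exists_isotropic_pair B halt hV3 D hBD (le_of_eq hder)
  -- find v outside the plane
  have hane : a ≠ 0 := by
    have := hind.ne_zero 0
    simpa using this
  have hspanab : Module.finrank F (span F ({a, b} : Set (L ⧸ Z))) = 2 := by
    rw [show ({a, b} : Set (L ⧸ Z)) = Set.range ![a, b] by
      ext x; simp [Fin.exists_fin_two, eq_comm, or_comm]]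
    rw [finrank_span_eq_card hind, Fintype.card_fin]
  have hne_top : span F ({a, b} : Set (L ⧸ Z)) ≠ ⊤ := by
    intro h
    rw [h, finrank_top] at hspanab
    omega
  obtain ⟨v, -, hv⟩ := SetLike.exists_of_lt hne_top.lt_top
  have hvne : v ≠ 0 := by
    intro h; exact hv (h ▸ Submodule.zero_mem _)
  -- lifts
  obtain ⟨xv, hxv⟩ := Submodule.Quotient.mk_surjective Z v
  obtain ⟨xa, hxa⟩ := Submodule.Quotient.mk_surjective Z a
  have hxvC : xv ∉ LieAlgebra.center F L := by
    intro h
    apply hvne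
    rw [← hxv, Submodule.Quotient.mk_eq_zero]
    exact (LieSubmodule.mem_toSubmodule _).mpr h
  have hxaC : xa ∉ LieAlgebra.center F L := by
    intro h
    apply hane
    rw [← hxa, Submodule.Quotient.mk_eq_zero]
    exact (LieSubmodule.mem_toSubmodule _).mpr h
  intro hconn
  obtain ⟨p⟩ := hconn.preconnected ⟨xv, hxvC⟩ ⟨xa, hxaC⟩
  -- invariant along walks
  have step : ∀ s t : {x : L // x ∉ LieAlgebra.center F L}, (commutingGraph F L).Adj s t →
      (Submodule.Quotient.mk s.1 : L ⧸ Z) ∈ span F ({v} : Set (L ⧸ Z)) →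
      (Submodule.Quotient.mk t.1 : L ⧸ Z) ∈ span F ({v} : Set (L ⧸ Z)) := by
    intro s t hadj hs
    obtain ⟨c, hc⟩ := (mem_span_singleton).mp hs
    have hc0 : c ≠ 0 := by
      rintro rfl
      rw [zero_smul] at hc
      apply s.2
      have := (Submodule.Quotient.mk_eq_zero Z).mp hc.symm
      exact (LieSubmodule.mem_toSubmodule _).mp this
    by_contra hns
    have hB0 : B (Submodule.Quotient.mk s.1) (Submodule.Quotient.mk t.1) = 0 := by
      rw [hBmk]; exact hadj.2
    rw [← hc] at hB0
    simp only [map_smul, LinearMap.smul_apply] at hB0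
    have hBvt : B v (Submodule.Quotient.mk t.1) = 0 :=
      (smul_eq_zero.mp hB0).resolve_left hc0
    exact sep_lemma B halt hnd hV3 a b hind hab v hv _ hBvt hns
  have mono : ∀ (s t : {x : L // x ∉ LieAlgebra.center F L})
      (q : (commutingGraph F L).Walk s t),
      (Submodule.Quotient.mk s.1 : L ⧸ Z) ∈ span F ({v} : Set (L ⧸ Z)) →
      (Submodule.Quotient.mk t.1 : L ⧸ Z) ∈ span F ({v} : Set (L ⧸ Z)) := by
    intro s t q
    induction q with
    | nil => exact id
    | cons h q ih => exact fun hs => ih (step _ _ h hs)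
  have hfin : (Submodule.Quotient.mk xa : L ⧸ Z) ∈ span F ({v} : Set (L ⧸ Z)) := by
    apply mono _ _ p
    rw [hxv]
    exact mem_span_singleton_self v
  rw [hxa, mem_span_singleton] at hfin
  obtain ⟨c, hc⟩ := hfin
  have hc0 : c ≠ 0 := by
    rintro rfl
    rw [zero_smul] at hc
    exact hane hc.symm
  apply hv
  rw [show v = c⁻¹ • a from by rw [← hc, smul_smul, inv_mul_cancel₀ hc0, one_smul]]
  exact Submodule.smul_mem _ _ (Submodule.subset_span (by simp))
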